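/- In the non-central case, with λ = t/(M²+Kσ²) and ρ = M²/σ², the optimized Chernoff bound satisfies ε = exp((−λ(ρ+K) − ρ + √(K² + 4λρ(ρ+K)))/2) / ((K + √(K² + 4λρ(ρ+K)))/(2λ(ρ+K)))^{K/2}, i.e., substituting t = λ(M²+Kσ²) and the optimal ν* into s(ν*, t) yields this expression depending only on λ, ρ, and K. -/

import Mathlib

open Set

/-- substituting t = λ(M²+Kσ²) and the optimal ν* into s(ν*,t) yields an
expression depending only on λ, ρ = M²/σ², and K. -/
theorem stmt12 (K : ℕ) (hK : 0 < K) (σ2 M2 lam : ℝ) (hσ : 0 < σ2) (hM : 0 < M2)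
    (hlam : lam ∈ Ioo (0 : ℝ) 1)
    (ρ : ℝ) (hρ : ρ = M2 / σ2)
    (t : ℝ) (ht : t = lam * (M2 + K * σ2))
    (νs : ℝ)
    (hνs : νs = (K * σ2 + Real.sqrt ((K : ℝ) ^ 2 * σ2 ^ 2 + 4 * t * M2)) / (4 * σ2 * t)
      - 1 / (2 * σ2)) :
    (1 + 2 * σ2 * νs) ^ (-(K : ℝ) / 2) * Real.exp (νs * t - νs * M2 / (1 + 2 * σ2 * νs)) =
      Real.exp ((-lam * (ρ + K) - ρ + Real.sqrt ((K : ℝ) ^ 2 + 4 * lam * ρ * (ρ + K))) / 2) /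
        (((K + Real.sqrt ((K : ℝ) ^ 2 + 4 * lam * ρ * (ρ + K))) / (2 * lam * (ρ + K)))
          ^ ((K : ℝ) / 2)) := by
  obtain ⟨hl0, hl1⟩ := hlam
  have hKpos : (0:ℝ) < K := by exact_mod_cast hK
  have hρpos : 0 < ρ := by rw [hρ]; positivity
  set S := Real.sqrt ((K : ℝ) ^ 2 + 4 * lam * ρ * (ρ + K)) with hSdef
  have harg : 0 < (K : ℝ) ^ 2 + 4 * lam * ρ * (ρ + K) := by positivity
  have hS0 : 0 < S := Real.sqrt_pos.mpr harg
  have hS2 : S ^ 2 = (K : ℝ) ^ 2 + 4 * lam * ρ * (ρ + K) := Real.sq_sqrt harg.le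
  have htpos : 0 < t := by rw [ht]; positivity
  have hbig : Real.sqrt ((K : ℝ) ^ 2 * σ2 ^ 2 + 4 * t * M2) = σ2 * S := by
    have h : (K : ℝ) ^ 2 * σ2 ^ 2 + 4 * t * M2
        = σ2 ^ 2 * ((K : ℝ) ^ 2 + 4 * lam * ρ * (ρ + K)) := by
      rw [ht, hρ]; field_simp
    rw [h, Real.sqrt_mul (by positivity), Real.sqrt_sq hσ.le, hSdef]
  have hA : 1 + 2 * σ2 * νs = (K + S) / (2 * lam * (ρ + K)) := by
    rw [hνs, hbig, ht, hρ]
    field_simp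
    ring
  have hApos : 0 < (K + S) / (2 * lam * (ρ + K)) := by positivity
  have hE : νs * t - νs * M2 / (1 + 2 * σ2 * νs)
      = (-lam * (ρ + K) - ρ + S) / 2 := by
    have hS2' : S ^ 2 * σ2 ^ 2 = (K:ℝ) ^ 2 * σ2 ^ 2 + 4 * lam * M2 * (M2 + K * σ2) := by
      rw [hρ] at hS2
      field_simp at hS2
      linarith [hS2]
    rw [hA, hνs, hbig, ht, hρ]
    field_simp
    linear_combination (-2) * hS2'
  rw [hE, hA, neg_div, Real.rpow_neg hApos.le]
  ring
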